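/- Let f be a compactly supported distribution-valued (or function) solution of f(x) = Σ_{j=0}^N c_j f(λx − d_j) with λ > 1, d₀ = 0 < d₁ < ⋯ < d_N, c₀ ≠ 0, and supp f ⊆ [0, d_N/(λ−1)]. If there exists a point u₀ in supp f and an integer m ≥ 0 such that the m-th derivative of f either fails to exist or is discontinuous at u₀, then for every ε > 0 there exists x₀ ∈ [0, ε) at which the m-th derivative of f either fails to exist or is discontinuous. -/

import Mathlib

/-- Bad points of the m-th derivative of a refinable function propagate toward the
left endpoint of the support. -/
theorem stmt7 (lam : ℝ) (hlam : 1 < lam) (N : ℕ) (c d : Fin (N + 1) → ℝ)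
    (hd0 : d 0 = 0) (hd : StrictMono d) (hc0 : c 0 ≠ 0)
    (f : ℝ → ℝ) (hsupp : HasCompactSupport f)
    (hsub : tsupport f ⊆ Set.Icc 0 (d (Fin.last N) / (lam - 1)))
    (heq : ∀ x : ℝ, f x = ∑ j, c j * f (lam * x - d j))
    (m : ℕ) (u₀ : ℝ) (hu₀ : u₀ ∈ tsupport f)
    (hbad : ¬ ContDiffAt ℝ (m : ℕ∞) f u₀) :
    ∀ ε : ℝ, 0 < ε → ∃ x₀ ∈ Set.Ico (0 : ℝ) ε, ¬ ContDiffAt ℝ (m : ℕ∞) f x₀ := by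
  intro ε hε
  have hlam0 : lam ≠ 0 := by linarith
  set B : Set ℝ := {x | ¬ ContDiffAt ℝ (m : ℕ∞) f x} with hBdef
  have hBsupp : B ⊆ tsupport f := by
    intro x hx
    by_contra hxs
    rw [notMem_tsupport_iff_eventuallyEq] at hxs
    exact hx (contDiffAt_const (c := 0) |>.congr_of_eventuallyEq hxs)
  have hBclosed : IsClosed B := by
    rw [← isOpen_compl_iff]
    rw [isOpen_iff_mem_nhds]
    intro x hx
    have hx' : ContDiffAt ℝ (m : ℕ∞) f x := not_not.mp hx
    filter_upwards [hx'.eventually (by exact_mod_cast ENat.coe_ne_top m)] with y hy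
    exact not_not.mpr hy
  have hne : B.Nonempty := ⟨u₀, hbad⟩
  have hbdd : BddBelow B := ⟨0, fun x hx => (hsub (hBsupp hx)).1⟩
  set b := sInf B with hbdef
  have hbB : b ∈ B := hBclosed.csInf_mem hne hbdd
  have hb0 : 0 ≤ b := le_csInf hne fun x hx => (hsub (hBsupp hx)).1
  have hbd : b = 0 := by
    by_contra h
    have hbpos : 0 < b := lt_of_le_of_ne hb0 (Ne.symm h)
    have good : ∀ y : ℝ, y < b → ContDiffAt ℝ (m : ℕ∞) f y := by
      intro y hy
      by_contra hy'
      exact absurd (csInf_le hbdd hy') (not_le_of_gt hy)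
    -- rewrite refinement equation
    have hEq : ∀ x : ℝ, f (lam * x)
        = (c 0)⁻¹ * (f x - ∑ j ∈ Finset.univ.erase 0, c j * f (lam * x - d j)) := by
      intro x
      have h1 := heq x
      rw [← Finset.add_sum_erase _ _ (Finset.mem_univ (0 : Fin (N + 1)))] at h1
      rw [hd0, sub_zero] at h1
      rw [h1, add_sub_cancel_right, inv_mul_cancel_left₀ hc0]
    have hg : ContDiffAt ℝ (m : ℕ∞) (fun x => f (lam * x)) (b / lam) := by
      have h1 : ContDiffAt ℝ (m : ℕ∞) f (b / lam) :=
        good _ (div_lt_self hbpos hlam)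
      have h2 : ContDiffAt ℝ (m : ℕ∞)
          (fun x => ∑ j ∈ Finset.univ.erase 0, c j * f (lam * x - d j)) (b / lam) := by
        apply ContDiffAt.sum
        intro j hj
        have hj0 : (0 : Fin (N + 1)) < j :=
          Fin.pos_of_ne_zero (Finset.ne_of_mem_erase hj)
        have hdj : 0 < d j := hd0 ▸ hd hj0
        have hpt : lam * (b / lam) - d j < b := by
          rw [mul_div_cancel₀ _ hlam0]
          linarith
        have hf : ContDiffAt ℝ (m : ℕ∞) f (lam * (b / lam) - d j) := good _ hpt
        have haff : ContDiffAt ℝ (m : ℕ∞) (fun x : ℝ => lam * x - d j) (b / lam) :=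
          (((contDiff_const.mul contDiff_id).sub contDiff_const).contDiffAt)
        have hcj : ContDiffAt ℝ (m : ℕ∞) (f ∘ fun x : ℝ => lam * x - d j) (b / lam) :=
          ContDiffAt.comp _ hf haff
        exact contDiffAt_const.mul hcj
      have : ContDiffAt ℝ (m : ℕ∞)
          (fun x => (c 0)⁻¹ * (f x - ∑ j ∈ Finset.univ.erase 0, c j * f (lam * x - d j)))
          (b / lam) := contDiffAt_const.mul (h1.sub h2)
      exact this.congr_of_eventuallyEq (Filter.Eventually.of_forall fun x => hEq x)
    have hdiv : ContDiffAt ℝ (m : ℕ∞) (fun x : ℝ => x / lam) b :=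
      (contDiff_id.div_const lam).contDiffAt
    have hcomp : ContDiffAt ℝ (m : ℕ∞) (fun x => f (lam * (x / lam))) b := by
      have hpt : (fun x : ℝ => x / lam) b = b / lam := rfl
      exact ContDiffAt.comp (g := fun x : ℝ => f (lam * x)) (f := fun x : ℝ => x / lam) b hg hdiv
    have : ContDiffAt ℝ (m : ℕ∞) f b := by
      refine hcomp.congr_of_eventuallyEq (Filter.Eventually.of_forall fun x => ?_)
      show f x = f (lam * (x / lam))
      rw [mul_div_cancel₀ _ hlam0]
    exact hbB this
  refine ⟨0, ⟨le_refl 0, hε⟩, ?_⟩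
  rw [← hbd]
  exact hbB
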